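/- arXiv:1109.1990 — 2 statements merged into one kernel-verified Lean document; each statement's English description precedes it below -/
import Mathlib

section
/- If the columns of X ∈ R^{n×p} are pairwise orthogonal, then ‖X·Diag(w)‖_* = Σ_{i=1}^p ‖X^{(i)}‖_2 |w_i|, i.e., the trace Lasso equals the weighted ℓ1-norm with weights given by the column norms of X. -/
noncomputable def traceNorm {n p : ℕ} (M : Matrix (Fin n) (Fin p) ℝ) : ℝ :=
  ((Matrix.posSemidef_conjTranspose_mul_self M).1.cfc Real.sqrt).trace

lemma sqrt_trace_congr {p : ℕ} {A B : Matrix (Fin p) (Fin p) ℝ}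
    (hA : A.PosSemidef) (hB : B.PosSemidef) (h : A = B) :
    (hA.1.cfc Real.sqrt).trace = (hB.1.cfc Real.sqrt).trace := by subst h; rfl

theorem trace_lasso_orthogonal_columns {n p : ℕ} (X : Matrix (Fin n) (Fin p) ℝ)
    (horth : ∀ i j : Fin p, i ≠ j → ∑ l, X l i * X l j = 0) (w : Fin p → ℝ) :
    traceNorm (X * Matrix.diagonal w) =
      ∑ i, Real.sqrt (∑ l, X l i ^ 2) * |w i| := by
  set M := X * Matrix.diagonal w with hM
  set d : Fin p → ℝ := fun i => (∑ l, X l i ^ 2) * w i ^ 2 with hd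
  have hdnn : ∀ i, 0 ≤ d i := fun i =>
    mul_nonneg (Finset.sum_nonneg fun l _ => sq_nonneg _) (sq_nonneg _)
  have hMent : ∀ l k, M l k = X l k * w k := fun l k => Matrix.mul_diagonal ..
  have hprod : M.conjTranspose * M = Matrix.diagonal d := by
    ext i j
    rw [Matrix.mul_apply]
    simp only [Matrix.conjTranspose_apply, star_trivial, hMent]
    by_cases hij : i = j
    · subst hij
      rw [Matrix.diagonal_apply_eq, hd]
      have h1 : ∀ l, X l i * w i * (X l i * w i) = X l i ^ 2 * w i ^ 2 := fun l => by ring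
      simp_rw [h1]
      rw [← Finset.sum_mul]
    · rw [Matrix.diagonal_apply_ne _ hij]
      have h1 : ∀ l, X l i * w i * (X l j * w j) = X l i * X l j * (w i * w j) :=
        fun l => by ring
      simp_rw [h1]
      rw [← Finset.sum_mul, horth i j hij, zero_mul]
  have hDpsd : (Matrix.diagonal d).PosSemidef :=
    Matrix.posSemidef_diagonal_iff.mpr fun i => hdnn i
  have hS : (Matrix.diagonal fun i => Real.sqrt (d i)).PosSemidef :=
    Matrix.posSemidef_diagonal_iff.mpr fun i => Real.sqrt_nonneg _
  have hsq : (Matrix.diagonal fun i => Real.sqrt (d i)) ^ 2 = Matrix.diagonal d := by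
    rw [pow_two, Matrix.diagonal_mul_diagonal]
    exact congrArg Matrix.diagonal (funext fun i => Real.mul_self_sqrt (hdnn i))
  have hsqrt : (Matrix.diagonal fun i => Real.sqrt (d i)) = hDpsd.1.cfc Real.sqrt := by
    open scoped MatrixOrder in
    rw [← hDpsd.1.cfc_eq, ← cfcₙ_eq_cfc, ← CFC.sqrt_eq_real_sqrt _ hDpsd.nonneg]
    open scoped MatrixOrder in
    exact (CFC.sqrt_unique (by rw [← pow_two]; exact hsq) hS.nonneg).symm
  have : traceNorm M = (hDpsd.1.cfc Real.sqrt).trace :=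
    sqrt_trace_congr (Matrix.posSemidef_conjTranspose_mul_self M) hDpsd hprod
  rw [this, ← hsqrt, Matrix.trace_diagonal]
  refine Finset.sum_congr rfl fun i _ => ?_
  rw [hd]
  rw [Real.sqrt_mul (Finset.sum_nonneg fun l _ => sq_nonneg _), Real.sqrt_sq_eq_abs]
end

section
/- The function (w, S) ↦ (1/2)‖y − Xw‖_2² + (λ/2)·wᵀ·Diag(diag(Xᵀ S^{-1} X))·w + (λ/2)·tr(S), defined for w ∈ R^p and S symmetric positive definite, is jointly convex in (w, S) for λ ≥ 0. -/
open Matrix Finset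

lemma posDef_smul' {n : ℕ} {S : Matrix (Fin n) (Fin n) ℝ} {t : ℝ} (ht : 0 < t)
    (hS : S.PosDef) : (t • S).PosDef := by
  refine Matrix.PosDef.of_dotProduct_mulVec_pos ?_ ?_
  · have h1 : Sᵀ = S := by simpa [Matrix.IsSymm] using hS.1
    simp only [Matrix.IsHermitian]
    rw [Matrix.conjTranspose_smul]
    simp [h1]
  · intro x hx
    rw [Matrix.smul_mulVec, dotProduct_smul, smul_eq_mul]
    exact mul_pos ht (hS.dotProduct_mulVec_pos hx)

lemma posDef_combo {n : ℕ} {S₁ S₂ : Matrix (Fin n) (Fin n) ℝ} {t s : ℝ}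
    (ht : 0 ≤ t) (hs : 0 ≤ s) (hts : t + s = 1)
    (h₁ : S₁.PosDef) (h₂ : S₂.PosDef) : (t • S₁ + s • S₂).PosDef := by
  rcases ht.eq_or_lt with h | h
  · have : s = 1 := by linarith
    simpa [← h, this] using h₂
  rcases hs.eq_or_lt with h' | h'
  · have : t = 1 := by linarith
    simpa [← h', this] using h₁
  exact (posDef_smul' h h₁).add (posDef_smul' h' h₂)

lemma frac_key {n : ℕ} {S : Matrix (Fin n) (Fin n) ℝ} (hS : S.PosDef)
    (m z : Fin n → ℝ) :
    2 * (z ⬝ᵥ m) - z ⬝ᵥ S.mulVec z ≤ m ⬝ᵥ S⁻¹.mulVec m := by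
  have hinv : (S⁻¹).PosDef := hS.inv
  have hdet : IsUnit S.det := isUnit_iff_ne_zero.mpr (ne_of_gt hS.det_pos)
  have hSinvS : S⁻¹ * S = 1 := Matrix.nonsing_inv_mul S hdet
  have hSSinv : S * S⁻¹ = 1 := Matrix.mul_nonsing_inv S hdet
  have hsym : Sᵀ = S := by simpa [Matrix.IsSymm] using hS.1
  have key1 : S⁻¹.mulVec (S.mulVec z) = z := by
    rw [Matrix.mulVec_mulVec, hSinvS, Matrix.one_mulVec]
  have key2 : (S.mulVec z) ⬝ᵥ (S⁻¹.mulVec m) = z ⬝ᵥ m := by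
    rw [← Matrix.vecMul_transpose, hsym, ← Matrix.dotProduct_mulVec,
      Matrix.mulVec_mulVec, hSSinv, Matrix.one_mulVec]
  have hnn := hinv.posSemidef.dotProduct_mulVec_nonneg (m - S.mulVec z)
  have hnn' : (0:ℝ) ≤ (m - S.mulVec z) ⬝ᵥ S⁻¹.mulVec (m - S.mulVec z) := by
    simpa using hnn
  rw [Matrix.mulVec_sub, dotProduct_sub, sub_dotProduct, sub_dotProduct, key1] at hnn'
  have hc1 : m ⬝ᵥ z = z ⬝ᵥ m := dotProduct_comm _ _
  have hc2 : (S.mulVec z) ⬝ᵥ z = z ⬝ᵥ S.mulVec z := dotProduct_comm _ _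
  linarith [hnn']

lemma frac_comb {n : ℕ} {S₁ S₂ : Matrix (Fin n) (Fin n) ℝ} (h₁ : S₁.PosDef)
    (h₂ : S₂.PosDef) (m₁ m₂ : Fin n → ℝ) {t s : ℝ} (ht : 0 ≤ t) (hs : 0 ≤ s)
    (hts : t + s = 1) :
    (t • m₁ + s • m₂) ⬝ᵥ (t • S₁ + s • S₂)⁻¹.mulVec (t • m₁ + s • m₂) ≤
      t * (m₁ ⬝ᵥ S₁⁻¹.mulVec m₁) + s * (m₂ ⬝ᵥ S₂⁻¹.mulVec m₂) := by
  set Sc := t • S₁ + s • S₂ with hSc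
  set mc := t • m₁ + s • m₂ with hmc
  have hc : Sc.PosDef := posDef_combo ht hs hts h₁ h₂
  have hdet : IsUnit Sc.det := isUnit_iff_ne_zero.mpr (ne_of_gt hc.det_pos)
  set z := Sc⁻¹.mulVec mc with hz
  have hScz : Sc.mulVec z = mc := by
    rw [hz, Matrix.mulVec_mulVec, Matrix.mul_nonsing_inv Sc hdet, Matrix.one_mulVec]
  have hval : mc ⬝ᵥ Sc⁻¹.mulVec mc = 2 * (z ⬝ᵥ mc) - z ⬝ᵥ Sc.mulVec z := by
    rw [hScz, ← hz]
    have : z ⬝ᵥ mc = mc ⬝ᵥ z := dotProduct_comm _ _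
    linarith
  have hsplit : 2 * (z ⬝ᵥ mc) - z ⬝ᵥ Sc.mulVec z =
      t * (2 * (z ⬝ᵥ m₁) - z ⬝ᵥ S₁.mulVec z) + s * (2 * (z ⬝ᵥ m₂) - z ⬝ᵥ S₂.mulVec z) := by
    rw [hSc, hmc]
    simp only [Matrix.add_mulVec, Matrix.smul_mulVec, dotProduct_add,
      dotProduct_smul, smul_eq_mul]
    ring
  have k1 := frac_key h₁ m₁ z
  have k2 := frac_key h₂ m₂ z
  have t1 : t * (2 * (z ⬝ᵥ m₁) - z ⬝ᵥ S₁.mulVec z) ≤ t * (m₁ ⬝ᵥ S₁⁻¹.mulVec m₁) :=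
    mul_le_mul_of_nonneg_left k1 ht
  have t2 : s * (2 * (z ⬝ᵥ m₂) - z ⬝ᵥ S₂.mulVec z) ≤ s * (m₂ ⬝ᵥ S₂⁻¹.mulVec m₂) :=
    mul_le_mul_of_nonneg_left k2 hs
  linarith [hval, hsplit]

lemma diag_eq {n p : ℕ} (X : Matrix (Fin n) (Fin p) ℝ) (M : Matrix (Fin n) (Fin n) ℝ)
    (i : Fin p) (w : ℝ) :
    (Xᵀ * M * X) i i * w ^ 2 =
      (w • fun j => X j i) ⬝ᵥ M.mulVec (w • fun j => X j i) := by
  simp only [Matrix.mul_apply, Matrix.mulVec, dotProduct, Matrix.transpose_apply,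
    Pi.smul_apply, smul_eq_mul, Finset.sum_mul, Finset.mul_sum]
  rw [Finset.sum_comm]
  refine Finset.sum_congr rfl fun j _ => Finset.sum_congr rfl fun k _ => by ring

theorem reweighted_objective_jointly_convex {n p : ℕ} (X : Matrix (Fin n) (Fin p) ℝ)
    (y : Fin n → ℝ) (lam : ℝ) (hlam : 0 ≤ lam) :
    ConvexOn ℝ
      {q : (Fin p → ℝ) × Matrix (Fin n) (Fin n) ℝ | q.2.PosDef}
      (fun q =>
        (1/2) * ∑ i, (y i - X.mulVec q.1 i) ^ 2 +
        (lam/2) * ∑ i, (X.transpose * q.2⁻¹ * X) i i * q.1 i ^ 2 +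
        (lam/2) * q.2.trace) := by
  constructor
  · rintro ⟨w₁, S₁⟩ h₁ ⟨w₂, S₂⟩ h₂ t u ht hu htu
    exact posDef_combo ht hu htu h₁ h₂
  rintro ⟨w₁, S₁⟩ h₁ ⟨w₂, S₂⟩ h₂ t u ht hu htu
  have hS₁ : S₁.PosDef := h₁
  have hS₂ : S₂.PosDef := h₂
  simp only [Prod.smul_mk, Prod.mk_add_mk, smul_eq_mul]
  have hA : ∀ i, (y i - X.mulVec (t • w₁ + u • w₂) i) ^ 2 ≤
      t * (y i - X.mulVec w₁ i) ^ 2 + u * (y i - X.mulVec w₂ i) ^ 2 := by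
    intro i
    have hl : X.mulVec (t • w₁ + u • w₂) i = t * X.mulVec w₁ i + u * X.mulVec w₂ i := by
      simp [Matrix.mulVec_add, Matrix.mulVec_smul]
    rw [hl]
    have hy : y i - (t * X.mulVec w₁ i + u * X.mulVec w₂ i) =
        t * (y i - X.mulVec w₁ i) + u * (y i - X.mulVec w₂ i) := by
      linear_combination (-(y i)) * htu
    rw [hy]
    set a := y i - X.mulVec w₁ i
    set b := y i - X.mulVec w₂ i
    have hid : t * a ^ 2 + u * b ^ 2 - (t * a + u * b) ^ 2 = t * u * (a - b) ^ 2 := by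
      linear_combination (-(t * a ^ 2 + u * b ^ 2)) * htu
    nlinarith [mul_nonneg (mul_nonneg ht hu) (sq_nonneg (a - b))]
  have sA : ∑ i, (y i - X.mulVec (t • w₁ + u • w₂) i) ^ 2 ≤
      t * ∑ i, (y i - X.mulVec w₁ i) ^ 2 + u * ∑ i, (y i - X.mulVec w₂ i) ^ 2 := by
    calc ∑ i, (y i - X.mulVec (t • w₁ + u • w₂) i) ^ 2
        ≤ ∑ i, (t * (y i - X.mulVec w₁ i) ^ 2 + u * (y i - X.mulVec w₂ i) ^ 2) :=
          Finset.sum_le_sum fun i _ => hA i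
      _ = _ := by rw [Finset.sum_add_distrib, ← Finset.mul_sum, ← Finset.mul_sum]
  have hB : ∀ i, (Xᵀ * (t • S₁ + u • S₂)⁻¹ * X) i i * ((t • w₁ + u • w₂) i) ^ 2 ≤
      t * ((Xᵀ * S₁⁻¹ * X) i i * (w₁ i) ^ 2) + u * ((Xᵀ * S₂⁻¹ * X) i i * (w₂ i) ^ 2) := by
    intro i
    rw [diag_eq, diag_eq, diag_eq]
    have hvec : ((t • w₁ + u • w₂) i) • (fun j => X j i) =
        t • ((w₁ i) • fun j => X j i) + u • ((w₂ i) • fun j => X j i) := by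
      funext j
      simp [smul_eq_mul]
      ring
    rw [hvec]
    exact frac_comb hS₁ hS₂ _ _ ht hu htu
  have sB : ∑ i, (Xᵀ * (t • S₁ + u • S₂)⁻¹ * X) i i * ((t • w₁ + u • w₂) i) ^ 2 ≤
      t * ∑ i, (Xᵀ * S₁⁻¹ * X) i i * (w₁ i) ^ 2 +
      u * ∑ i, (Xᵀ * S₂⁻¹ * X) i i * (w₂ i) ^ 2 := by
    calc ∑ i, (Xᵀ * (t • S₁ + u • S₂)⁻¹ * X) i i * ((t • w₁ + u • w₂) i) ^ 2
        ≤ ∑ i, (t * ((Xᵀ * S₁⁻¹ * X) i i * (w₁ i) ^ 2) +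
            u * ((Xᵀ * S₂⁻¹ * X) i i * (w₂ i) ^ 2)) :=
          Finset.sum_le_sum fun i _ => hB i
      _ = _ := by rw [Finset.sum_add_distrib, ← Finset.mul_sum, ← Finset.mul_sum]
  have sC : (t • S₁ + u • S₂).trace = t * S₁.trace + u * S₂.trace := by
    simp [Matrix.trace_add, Matrix.trace_smul]
  have h2 : (0:ℝ) ≤ lam / 2 := by linarith
  have hA' := mul_le_mul_of_nonneg_left sA (by norm_num : (0:ℝ) ≤ 1/2)
  have hB' := mul_le_mul_of_nonneg_left sB h2
  rw [sC]
  nlinarith [hA', hB']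
end
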